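/- For positive definite matrices A and B, the Bures-Wasserstein distance satisfies d_BW(A,B) = ‖A^{1/2} − B^{1/2}U‖_F, where d_BW(A,B) = [tr(A) + tr(B) − 2 tr((A^{1/2}BA^{1/2})^{1/2})]^{1/2}, ‖·‖_F is the Frobenius norm, and U is the unitary from the polar decomposition B^{1/2}A^{1/2} = U(A^{1/2}BA^{1/2})^{1/2}. -/

import Mathlib

open Matrix Filter Asymptotics
open scoped ComplexOrder

/-- The PSD square root of a matrix (0 if not PSD). -/
noncomputable def msqrt {n : ℕ} (M : Matrix (Fin n) (Fin n) ℂ) : Matrix (Fin n) (Fin n) ℂ :=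
  letI := Classical.propDecidable M.PosSemidef
  if h : M.PosSemidef then
    (h.1.eigenvectorUnitary : Matrix (Fin n) (Fin n) ℂ) *
      diagonal (((↑) : ℝ → ℂ) ∘ Real.sqrt ∘ h.1.eigenvalues) *
      (star (h.1.eigenvectorUnitary : Matrix (Fin n) (Fin n) ℂ)) else 0

/-- `(AB)^{1/2} := A^{1/2} (A^{1/2} B A^{1/2})^{1/2} A^{-1/2}`. -/
noncomputable def sqAB {n : ℕ} (A B : Matrix (Fin n) (Fin n) ℂ) : Matrix (Fin n) (Fin n) ℂ :=
  msqrt A * msqrt (msqrt A * B * msqrt A) * (msqrt A)⁻¹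

/-- Bures-Wasserstein geodesic `A ◇_t B`. -/
noncomputable def geo {n : ℕ} (A B : Matrix (Fin n) (Fin n) ℂ) (t : ℝ) : Matrix (Fin n) (Fin n) ℂ :=
  ((1 - t)^2 : ℝ) • A + (t^2 : ℝ) • B + (t * (1 - t) : ℝ) • (sqAB A B + (sqAB A B)ᴴ)

/-- Bures-Wasserstein distance. -/
noncomputable def dBW {n : ℕ} (A B : Matrix (Fin n) (Fin n) ℂ) : ℝ :=
  Real.sqrt ((Matrix.trace A).re + (Matrix.trace B).re -
    2 * (Matrix.trace (msqrt (msqrt A * B * msqrt A))).re)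

lemma msqrt_mul_self {n : ℕ} {M : Matrix (Fin n) (Fin n) ℂ} (h : M.PosSemidef) :
    msqrt M * msqrt M = M := by
  unfold msqrt; rw [dif_pos h]
  set V := (h.1.eigenvectorUnitary : Matrix (Fin n) (Fin n) ℂ) with hVdef
  have hV : star V * V = 1 := by simp [V]
  rw [show ∀ D : Matrix (Fin n) (Fin n) ℂ, V * D * star V * (V * D * star V)
      = V * D * (star V * V) * D * star V from fun D => by simp only [mul_assoc],
    hV, mul_one, mul_assoc V, diagonal_mul_diagonal]
  conv_rhs => rw [h.1.spectral_theorem, Unitary.conjStarAlgAut_apply]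
  congr 3
  funext i
  simp only [Function.comp_apply]
  rw [← Complex.ofReal_mul, Real.mul_self_sqrt (h.eigenvalues_nonneg i)]
  rfl

lemma msqrt_herm {n : ℕ} {M : Matrix (Fin n) (Fin n) ℂ} (h : M.PosSemidef) :
    (msqrt M)ᴴ = msqrt M := by
  unfold msqrt; rw [dif_pos h]
  simp [Matrix.star_eq_conjTranspose, conjTranspose_mul, diagonal_conjTranspose, mul_assoc]
  congr 3
  funext i
  simp [Complex.conj_ofReal]

theorem stmt7 {n : ℕ} (A B U : Matrix (Fin n) (Fin n) ℂ)
    (hA : A.PosDef) (hB : B.PosDef) (hU : U ∈ Matrix.unitaryGroup (Fin n) ℂ)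
    (hpolar : msqrt B * msqrt A = U * msqrt (msqrt A * B * msqrt A)) :
    dBW A B =
      Real.sqrt ((Matrix.trace ((msqrt A - msqrt B * U)ᴴ *
        (msqrt A - msqrt B * U))).re) := by
  set sA := msqrt A with hsA
  set sB := msqrt B with hsB
  set M := msqrt (msqrt A * B * msqrt A) with hM
  have hAps := hA.posSemidef
  have hBps := hB.posSemidef
  have hsAH : sAᴴ = sA := msqrt_herm hAps
  have hsBH : sBᴴ = sB := msqrt_herm hBps
  have hsAA : sA * sA = A := msqrt_mul_self hAps
  have hsBB : sB * sB = B := msqrt_mul_self hBps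
  have hMps : (sA * B * sA).PosSemidef := by
    have := hBps.conjTranspose_mul_mul_same sA
    rwa [hsAH] at this
  have hMH : Mᴴ = M := msqrt_herm hMps
  have hUU : Uᴴ * U = 1 := by
    have := hU.1
    simpa [Matrix.star_eq_conjTranspose] using this
  have hUU' : U * Uᴴ = 1 := by
    have := hU.2
    simpa [Matrix.star_eq_conjTranspose] using this
  -- sA * sB = M * Uᴴ
  have hpolar' : sA * sB = M * Uᴴ := by
    have := congrArg conjTranspose hpolar
    simpa [conjTranspose_mul, hsAH, hsBH, hMH] using this
  have key : Matrix.trace ((sA - sB * U)ᴴ * (sA - sB * U)) =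
      Matrix.trace A + Matrix.trace B - 2 * Matrix.trace M := by
    have expand : (sA - sB * U)ᴴ * (sA - sB * U) =
        A - M - Uᴴ * (U * M) + Uᴴ * B * U := by
      have h1 : sA * (sB * U) = M := by
        rw [← mul_assoc, hpolar', mul_assoc, hUU, mul_one]
      have h2 : (sB * U)ᴴ * sA = Uᴴ * (U * M) := by
        rw [conjTranspose_mul, hsBH, mul_assoc, hpolar]
      have h3 : (sB * U)ᴴ * (sB * U) = Uᴴ * B * U := by
        rw [conjTranspose_mul, hsBH]
        rw [show Uᴴ * sB * (sB * U) = Uᴴ * (sB * sB) * U by noncomm_ring, hsBB]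
      rw [conjTranspose_sub, hsAH, sub_mul, mul_sub, mul_sub, h1, h2, h3, hsAA]
      noncomm_ring
    rw [expand]
    have htB : Matrix.trace (Uᴴ * B * U) = Matrix.trace B := by
      rw [Matrix.trace_mul_cycle, hUU', one_mul]
    have htM : Matrix.trace (Uᴴ * (U * M)) = Matrix.trace M := by
      rw [← mul_assoc, hUU, one_mul]
    simp only [Matrix.trace_add, Matrix.trace_sub, htB, htM]
    ring
  rw [dBW, key]
  congr 1
  simp only [Complex.add_re, Complex.sub_re, Complex.mul_re, Complex.ofReal_re,
    Complex.ofReal_im]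
  norm_num
  rfl
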